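/- Let K be a field with a field topology τ. Then τ is gt-henselian if and only if for every n ≥ 1 and every τ-neighbourhood P ⊆ K of −1 there is a τ-neighbourhood O ⊆ K of 0 such that for all c₂, …, c_n ∈ O the polynomial 1 + X + c₂X² + … + c_nXⁿ has a root in P. -/

import Mathlib

open Topology

/-- A field topology is gt-henselian if for every `n ≥ 1` and every neighbourhood `P` of
`−1` there is a neighbourhood `O` of `0` such that for all `a₀, …, a_{n−1} ∈ O` the
polynomial `X^{n+1} + X^n + a_{n−1}X^{n−1} + … + a₁X + a₀` has a root in `P`. -/
def GtHenselian (K : Type*) [Field K] [TopologicalSpace K] : Prop :=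
  ∀ n : ℕ, 1 ≤ n → ∀ P ∈ nhds (-1 : K), ∃ O ∈ nhds (0 : K),
    ∀ a : ℕ → K, (∀ i < n, a i ∈ O) →
      ∃ x ∈ P, x ^ (n + 1) + x ^ n + ∑ i ∈ Finset.range n, a i * x ^ i = 0

/-- Key algebraic identity relating the two polynomial families via `x ↦ x⁻¹`. -/
lemma key_identity {K : Type*} [Field K] (x : K) (hx : x ≠ 0) (n : ℕ) (hn : 1 ≤ n)
    (c : ℕ → K) :
    (1 + x⁻¹ + ∑ j ∈ Finset.Icc 2 n, c j * x⁻¹ ^ j) * x ^ n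
      = x ^ n + x ^ (n - 1) + ∑ i ∈ Finset.range (n - 1), c (n - i) * x ^ i := by
  have hpow : ∀ j ≤ n, x⁻¹ ^ j * x ^ n = x ^ (n - j) := by
    intro j hj
    rw [inv_pow, inv_mul_eq_iff_eq_mul₀ (pow_ne_zero _ hx), ← pow_add]
    congr 1
    omega
  rw [add_mul, add_mul, Finset.sum_mul, one_mul]
  have h1 : x⁻¹ * x ^ n = x ^ (n - 1) := by simpa using hpow 1 hn
  rw [h1]
  congr 1
  calc ∑ j ∈ Finset.Icc 2 n, c j * x⁻¹ ^ j * x ^ n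
      = ∑ j ∈ Finset.Icc 2 n, c j * x ^ (n - j) :=
        Finset.sum_congr rfl (fun j hj => by
          simp only [Finset.mem_Icc] at hj
          rw [mul_assoc, hpow j hj.2])
    _ = ∑ i ∈ Finset.range (n - 1), c (n - i) * x ^ i := by
        refine Finset.sum_nbij' (fun j => n - j) (fun i => n - i) ?_ ?_ ?_ ?_ ?_
        · intro j hj
          simp only [Finset.mem_Icc] at hj
          simp only [Finset.mem_range]
          omega
        · intro i hi
          simp only [Finset.mem_range] at hi
          simp only [Finset.mem_Icc]
          omega
        · intro j hj
          simp only [Finset.mem_Icc] at hj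
          show n - (n - j) = j
          omega
        · intro i hi
          simp only [Finset.mem_range] at hi
          show n - (n - i) = i
          omega
        · intro j hj
          simp only [Finset.mem_Icc] at hj
          show c j * x ^ (n - j) = c (n - (n - j)) * x ^ (n - j)
          rw [Nat.sub_sub_self hj.2]

/-- A field topology is gt-henselian if and only if for every `n ≥ 1` and
every neighbourhood `P` of `−1` there is a neighbourhood `O` of `0` such that for all
`c₂, …, c_n ∈ O` the polynomial `1 + X + c₂X² + … + c_nXⁿ` has a root in `P`. -/
theorem statement13 {K : Type*} [Field K] [TopologicalSpace K]
    [IsTopologicalRing K] [ContinuousInv₀ K] [T2Space K]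
    (hnd : ¬ DiscreteTopology K) :
    GtHenselian K ↔
      ∀ n : ℕ, 1 ≤ n → ∀ P ∈ nhds (-1 : K), ∃ O ∈ nhds (0 : K),
        ∀ c : ℕ → K, (∀ i, 2 ≤ i → i ≤ n → c i ∈ O) →
          ∃ x ∈ P, 1 + x + ∑ i ∈ Finset.Icc 2 n, c i * x ^ i = 0 := by
  have hne : (-1 : K) ≠ 0 := by norm_num
  have hinv : ∀ P ∈ nhds (-1 : K), (Inv.inv ⁻¹' P : Set K) ∈ nhds (-1 : K) := by
    intro P hP
    have h := continuousAt_inv₀ hne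
    have : P ∈ nhds ((-1 : K)⁻¹) := by rwa [inv_neg, inv_one]
    exact h this
  constructor
  · intro h n hn P hP
    rcases eq_or_lt_of_le hn with h1 | h2
    · -- n = 1
      refine ⟨Set.univ, Filter.univ_mem, fun c _ => ⟨-1, mem_of_mem_nhds hP, ?_⟩⟩
      rw [Finset.Icc_eq_empty (by omega)]
      simp
    · -- n ≥ 2; use GtHenselian at n - 1
      set P' : Set K := (Inv.inv ⁻¹' P) ∩ {(0 : K)}ᶜ with hP'def
      have hP' : P' ∈ nhds (-1 : K) :=
        Filter.inter_mem (hinv P hP)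
          (isOpen_compl_singleton.mem_nhds (by simpa using hne))
      obtain ⟨O, hO, hroot⟩ := h (n - 1) (by omega) P' hP'
      refine ⟨O, hO, fun c hc => ?_⟩
      obtain ⟨x, hxP', hx⟩ := hroot (fun i => c (n - i))
        (fun i hi => hc (n - i) (by omega) (by omega))
      have hx0 : x ≠ 0 := hxP'.2
      refine ⟨x⁻¹, hxP'.1, ?_⟩
      have key := key_identity x hx0 n (by omega) c
      have hn1 : n - 1 + 1 = n := by omega
      rw [hn1] at hx
      rw [hx] at key
      rcases mul_eq_zero.mp key with h0 | h0
      · exact h0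
      · exact absurd h0 (pow_ne_zero _ hx0)
  · intro h n hn P hP
    obtain ⟨O, hO, hroot⟩ := h (n + 1) (by omega) (Inv.inv ⁻¹' P) (hinv P hP)
    refine ⟨O, hO, fun a ha => ?_⟩
    obtain ⟨y, hyP, hy⟩ := hroot (fun j => a (n + 1 - j))
      (fun j hj2 hjn => ha (n + 1 - j) (by omega))
    have hy0 : y ≠ 0 := by
      rintro rfl
      have hz : ∑ j ∈ Finset.Icc 2 (n + 1), a (n + 1 - j) * (0 : K) ^ j = 0 :=
        Finset.sum_eq_zero (fun j hj => by
          simp only [Finset.mem_Icc] at hj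
          rw [zero_pow (by omega), mul_zero])
      rw [hz] at hy
      simp at hy
    refine ⟨y⁻¹, hyP, ?_⟩
    have key := key_identity y⁻¹ (inv_ne_zero hy0) (n + 1) (by omega) (fun j => a (n + 1 - j))
    rw [inv_inv] at key
    rw [hy, zero_mul] at key
    have hs : ∑ i ∈ Finset.range (n + 1 - 1), a (n + 1 - (n + 1 - i)) * y⁻¹ ^ i
        = ∑ i ∈ Finset.range n, a i * y⁻¹ ^ i := by
      apply Finset.sum_congr (by congr 1)
      intro i hi
      simp only [Finset.mem_range] at hi
      congr 2
      omega
    rw [hs] at key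
    have : n + 1 - 1 = n := by omega
    rw [this] at key
    linear_combination -key
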